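/- arXiv:0709.1417 — 3 statements merged into one kernel-verified Lean document; each statement's English description precedes it below -/
import Mathlib

section
/- Let d ≥ 1 and let F = (F₀,F₁,F₂,F₃) = (z^d, 0, 1, 0). Then the linear map dQ_F : (ℂ[z]_{≤d})⁴ → ℂ[z]_{≤2d-2} given by dQ_F(U) = {U₀,F₁} + {F₀,U₁} + {U₂,F₃} + {F₂,U₃}, where {G,H} = G'·H - G·H', is surjective. -/
open Polynomial Finset

lemma key (e k : ℕ) (hk : k ≤ e) (a : ℂ) :
    derivative (X ^ (e+1) : ℂ[X]) * (C a * X ^ k) - X ^ (e+1) * derivative (C a * X ^ k)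
      = C (a * ((e + 1 - k : ℕ) : ℂ)) * X ^ (e + k) := by
  have h : ((e + 1 - k : ℕ) : ℂ) = (e:ℂ) + 1 - k := by
    push_cast [Nat.cast_sub (by omega : k ≤ e+1)]; ring
  rcases k with _ | j
  · simp [derivative_X_pow]; ring
  · simp only [derivative_X_pow, derivative_C_mul, h, Nat.add_sub_cancel, C_mul, C_add, C_1,
      Nat.cast_add, Nat.cast_one, map_sub]
    ring

/-- For `F = (z^d, 0, 1, 0)`, the linear map
`dQ_F(U) = {U₀,F₁} + {F₀,U₁} + {U₂,F₃} + {F₂,U₃}` (with `{G,H} = G'H - GH'`)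
from `(ℂ[z]_{≤d})⁴` to `ℂ[z]_{≤2d-2}` is surjective. -/
theorem stmt4 (d : ℕ) (hd : 1 ≤ d) (R : ℂ[X]) (hR : R.natDegree ≤ 2 * d - 2) :
    ∃ U₀ U₁ U₂ U₃ : ℂ[X],
      U₀.natDegree ≤ d ∧ U₁.natDegree ≤ d ∧ U₂.natDegree ≤ d ∧ U₃.natDegree ≤ d ∧
      (derivative U₀ * 0 - U₀ * derivative (0 : ℂ[X]))
        + (derivative (X ^ d : ℂ[X]) * U₁ - X ^ d * derivative U₁)
        + (derivative U₂ * 0 - U₂ * derivative (0 : ℂ[X]))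
        + (derivative (1 : ℂ[X]) * U₃ - 1 * derivative U₃) = R := by
  obtain ⟨e, rfl⟩ : ∃ e, d = e + 1 := ⟨d - 1, by omega⟩
  have hR' : R.natDegree < 2 * e + 1 := by omega
  set U₁ : ℂ[X] := ∑ k ∈ range (e+1), C (R.coeff (e+k) / ((e+1-k : ℕ):ℂ)) * X ^ k with hU₁
  set U₃ : ℂ[X] := -∑ i ∈ range e, C (R.coeff i / ((i+1 : ℕ):ℂ)) * X ^ (i+1) with hU₃
  have hT : derivative (X^(e+1) : ℂ[X]) * U₁ - X^(e+1) * derivative U₁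
      = ∑ k ∈ range (e+1), C (R.coeff (e+k)) * X^(e+k) := by
    rw [hU₁, derivative_sum, Finset.mul_sum, Finset.mul_sum, ← Finset.sum_sub_distrib]
    refine Finset.sum_congr rfl fun k hk => ?_
    rw [key e k (by simp at hk; omega)]
    congr 1
    rw [div_mul_cancel₀]
    exact Nat.cast_ne_zero.2 (by simp at hk; omega)
  have hU₃' : -derivative U₃ = ∑ i ∈ range e, C (R.coeff i) * X^i := by
    rw [hU₃, derivative_neg, neg_neg, derivative_sum]
    refine Finset.sum_congr rfl fun i hi => ?_
    rw [derivative_C_mul, derivative_X_pow, Nat.add_sub_cancel, ← mul_assoc, ← C_mul,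
      div_mul_cancel₀]
    exact Nat.cast_ne_zero.2 (by omega)
  have hRsum : R = ∑ i ∈ range (2*e+1), C (R.coeff i) * X^i := by
    conv_lhs => rw [R.as_sum_range' _ hR']
    exact Finset.sum_congr rfl fun i _ => (C_mul_X_pow_eq_monomial).symm
  have final : (derivative (X^(e+1):ℂ[X]) * U₁ - X^(e+1) * derivative U₁) - derivative U₃ = R := by
    rw [hRsum, show 2*e+1 = e + (e+1) from by ring, Finset.sum_range_add, hT,
      sub_eq_add_neg _ (derivative U₃), hU₃']
    ring
  refine ⟨0, U₁, 0, U₃, by simp, ?_, by simp, ?_, ?_⟩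
  · apply natDegree_sum_le_of_forall_le
    intro k hk
    exact le_trans (natDegree_C_mul_X_pow_le _ _) (by simp at hk; omega)
  · rw [hU₃, natDegree_neg]
    apply natDegree_sum_le_of_forall_le
    intro i hi
    exact le_trans (natDegree_C_mul_X_pow_le _ _) (by simp at hi; omega)
  · simpa [← sub_eq_add_neg] using final
end

section
/- Let d ≥ 3 and let F = (z^{d-1} - 1, -d·z/(d-2), z^d - d·z/(d-2), 1). Then the linear map dQ_F : (ℂ[z]_{≤d})⁴ → ℂ[z]_{≤2d-2}, dQ_F(U) = {U₀,F₁} + {F₀,U₁} + {U₂,F₃} + {F₂,U₃} with {G,H} = G'H - GH', is surjective. -/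
open Polynomial

noncomputable def Ex (d : ℕ) (U₀ U₁ U₂ U₃ : ℂ[X]) : ℂ[X] :=
      (derivative U₀ * (C (-(d : ℂ) / ((d : ℂ) - 2)) * X)
          - U₀ * derivative (C (-(d : ℂ) / ((d : ℂ) - 2)) * X))
        + (derivative (X ^ (d - 1) - 1 : ℂ[X]) * U₁ - (X ^ (d - 1) - 1) * derivative U₁)
        + (derivative U₂ * 1 - U₂ * derivative (1 : ℂ[X]))
        + (derivative (X ^ d - C ((d : ℂ) / ((d : ℂ) - 2)) * X : ℂ[X]) * U₃
          - (X ^ d - C ((d : ℂ) / ((d : ℂ) - 2)) * X) * derivative U₃)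

def P (d : ℕ) (R : ℂ[X]) : Prop :=
  ∃ U₀ U₁ U₂ U₃ : ℂ[X],
    U₀.natDegree ≤ d ∧ U₁.natDegree ≤ d ∧ U₂.natDegree ≤ d ∧ U₃.natDegree ≤ d ∧
    Ex d U₀ U₁ U₂ U₃ = R

lemma P_zero (d : ℕ) : P d 0 := ⟨0,0,0,0, by simp, by simp, by simp, by simp, by simp [Ex]⟩

lemma P_add {d : ℕ} {R S : ℂ[X]} (hR : P d R) (hS : P d S) : P d (R + S) := by
  obtain ⟨A,B,Cc,D,hA,hB,hC,hD,hE⟩ := hR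
  obtain ⟨A',B',C',D',hA',hB',hC',hD',hE'⟩ := hS
  refine ⟨A+A', B+B', Cc+C', D+D', ?_, ?_, ?_, ?_, ?_⟩
  · exact le_trans (natDegree_add_le _ _) (max_le hA hA')
  · exact le_trans (natDegree_add_le _ _) (max_le hB hB')
  · exact le_trans (natDegree_add_le _ _) (max_le hC hC')
  · exact le_trans (natDegree_add_le _ _) (max_le hD hD')
  · rw [← hE, ← hE']; simp only [Ex, derivative_add]; ring

lemma P_Cmul {d : ℕ} {R : ℂ[X]} (a : ℂ) (hR : P d R) : P d (C a * R) := by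
  obtain ⟨A,B,Cc,D,hA,hB,hC,hD,hE⟩ := hR
  refine ⟨C a * A, C a * B, C a * Cc, C a * D, ?_, ?_, ?_, ?_, ?_⟩
  · exact le_trans (natDegree_C_mul_le _ _) hA
  · exact le_trans (natDegree_C_mul_le _ _) hB
  · exact le_trans (natDegree_C_mul_le _ _) hC
  · exact le_trans (natDegree_C_mul_le _ _) hD
  · rw [← hE]; simp only [Ex, derivative_C_mul]; ring

lemma genA (d k : ℕ) (hk : k + 1 ≤ d) : P d (X ^ k : ℂ[X]) := by
  refine ⟨0, 0, C ((k+1 : ℂ))⁻¹ * X ^ (k+1), 0, by simp, by simp, ?_, by simp, ?_⟩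
  · exact le_trans (natDegree_C_mul_le _ _) (by simpa using hk)
  · have hk1 : ((k:ℂ)+1) ≠ 0 := Nat.cast_add_one_ne_zero k
    simp only [Ex, derivative_zero, derivative_C_mul, derivative_X_pow, derivative_one,
      Nat.add_sub_cancel, mul_zero, zero_mul, sub_zero, zero_sub, mul_one, zero_add, add_zero,
      neg_zero, zero_mul, mul_zero]
    push_cast
    rw [← mul_assoc, ← C_mul, inv_mul_cancel₀ hk1, C_1, one_mul]

lemma genC (e j : ℕ) (hj : j ≠ e) (hje : j ≤ e + 1) : P (e+3) (X ^ (e+3+j) : ℂ[X]) := by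
  refine ⟨0, C (((e:ℂ) - j)⁻¹) * X ^ (j+2), C (-((e:ℂ) - j)⁻¹) * X ^ (j+2), 0,
    by simp, ?_, ?_, by simp, ?_⟩
  · exact le_trans (natDegree_C_mul_le _ _) (by simp; omega)
  · exact le_trans (natDegree_C_mul_le _ _) (by simp; omega)
  · have ha : ((e:ℂ) - (j:ℂ)) ≠ 0 := sub_ne_zero.mpr (fun h => hj (by exact_mod_cast h.symm))
    simp only [Ex, derivative_zero, derivative_C_mul, derivative_X_pow, derivative_one,
      derivative_sub, Nat.add_sub_cancel, mul_zero, zero_mul, sub_zero, zero_sub, mul_one,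
      zero_add, add_zero, neg_zero]
    push_cast
    ring_nf
    simp only [map_neg, C_add, map_natCast, map_ofNat]
    have h1 : (C (((e:ℂ)-(j:ℂ))⁻¹) * (((e:ℕ) : ℂ[X]) - ((j:ℕ) : ℂ[X])) : ℂ[X]) = 1 := by
      rw [← map_natCast (C : ℂ →+* ℂ[X]) e, ← map_natCast (C : ℂ →+* ℂ[X]) j,
        ← C_sub, ← C_mul, inv_mul_cancel₀ ha, C_1]
    linear_combination (X^3*(X:ℂ[X])^e*X^j) * h1

lemma genB (e : ℕ) : P (e+3) (X ^ (2*e+3) : ℂ[X]) := by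
  refine ⟨0, 0, C (-((((e:ℂ)+3)/((e:ℂ)+1)) * e) / (2*((e:ℂ)+2))) * X ^ (e+2),
    C (1/2 : ℂ) * X ^ (e+1), by simp, by simp, ?_, ?_, ?_⟩
  · exact le_trans (natDegree_C_mul_le _ _) (by simp)
  · exact le_trans (natDegree_C_mul_le _ _) (by simp)
  · have h1 : ((e:ℂ)+1) ≠ 0 := Nat.cast_add_one_ne_zero e
    have h2 : ((e:ℂ)+2) ≠ 0 := by
      have : (((e+2:ℕ)):ℂ) ≠ 0 := Nat.cast_ne_zero.mpr (by omega)
      push_cast at this; exact this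
    have h1' : (1+(e:ℂ)) ≠ 0 := by rw [add_comm]; exact h1
    have h2' : (2+(e:ℂ)) ≠ 0 := by rw [add_comm]; exact h2
    apply Polynomial.funext
    intro x
    simp only [Ex, derivative_zero, derivative_C_mul, derivative_X_pow, derivative_one,
      derivative_sub, derivative_X, derivative_C, Nat.add_sub_cancel, mul_zero, zero_mul,
      sub_zero, zero_sub, mul_one, zero_add, add_zero, neg_zero, eval_add, eval_sub, eval_mul,
      eval_pow, eval_C, eval_X, eval_one, eval_natCast]
    push_cast
    field_simp
    ring_nf
    field_simp
    ring

lemma genAll (e k : ℕ) (hk : k ≤ 2*e+4) : P (e+3) (X ^ k : ℂ[X]) := by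
  rcases le_or_gt (k+1) (e+3) with h | h
  · exact genA _ _ h
  · rcases eq_or_ne k (2*e+3) with rfl | hne
    · exact genB e
    · obtain ⟨j, rfl⟩ : ∃ j, k = e + 3 + j := ⟨k - (e+3), by omega⟩
      exact genC e j (by omega) (by omega)

/-- For `d ≥ 3` and `F = (z^{d-1} - 1, -d·z/(d-2), z^d - d·z/(d-2), 1)`, the linear
map `dQ_F(U) = {U₀,F₁} + {F₀,U₁} + {U₂,F₃} + {F₂,U₃}` (with `{G,H} = G'H - GH'`)
from `(ℂ[z]_{≤d})⁴` to `ℂ[z]_{≤2d-2}` is surjective. -/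
theorem stmt5 (d : ℕ) (hd : 3 ≤ d) (R : ℂ[X]) (hR : R.natDegree ≤ 2 * d - 2) :
    ∃ U₀ U₁ U₂ U₃ : ℂ[X],
      U₀.natDegree ≤ d ∧ U₁.natDegree ≤ d ∧ U₂.natDegree ≤ d ∧ U₃.natDegree ≤ d ∧
      (derivative U₀ * (C (-(d : ℂ) / ((d : ℂ) - 2)) * X)
          - U₀ * derivative (C (-(d : ℂ) / ((d : ℂ) - 2)) * X))
        + (derivative (X ^ (d - 1) - 1 : ℂ[X]) * U₁ - (X ^ (d - 1) - 1) * derivative U₁)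
        + (derivative U₂ * 1 - U₂ * derivative (1 : ℂ[X]))
        + (derivative (X ^ d - C ((d : ℂ) / ((d : ℂ) - 2)) * X : ℂ[X]) * U₃
          - (X ^ d - C ((d : ℂ) / ((d : ℂ) - 2)) * X) * derivative U₃) = R := by
  obtain ⟨e, rfl⟩ : ∃ e, d = e + 3 := ⟨d - 3, by omega⟩
  suffices h : P (e+3) R by
    obtain ⟨U₀, U₁, U₂, U₃, h0, h1, h2, h3, hE⟩ := h
    exact ⟨U₀, U₁, U₂, U₃, h0, h1, h2, h3, hE⟩
  have hR' : R.natDegree ≤ 2*e+4 := by omega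
  rw [R.as_sum_range]
  apply Finset.sum_induction _ (P (e+3)) (fun a b ha hb => P_add ha hb) (P_zero _)
  intro i hi
  rw [← C_mul_X_pow_eq_monomial]
  exact P_Cmul _ (genAll e i (by simp only [Finset.mem_range] at hi; omega))
end

section
/- Let d ≥ 3, α ∈ ℂ \ {0}, and ℓ, k positive integers with ℓ ≠ k and ℓ + k = d. For any t ∈ ℂ, the quadruple F_t(z) = (z^k - α, t·((ℓ+k)/(ℓ-k))·z^ℓ, z^ℓ(z^k - α(ℓ+k)/(ℓ-k)), t) satisfies Q(F_t) = F₁F₀' - F₀F₁' + F₃F₂' - F₂F₃' = 0. -/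
open Polynomial

/-- For `d ≥ 3`, `α ≠ 0`, positive integers `ℓ ≠ k` with `ℓ + k = d`, and any `t ∈ ℂ`,
the quadruple `F_t = (z^k - α, t((ℓ+k)/(ℓ-k))z^ℓ, z^ℓ(z^k - α(ℓ+k)/(ℓ-k)), t)`
satisfies `Q(F_t) = F₁F₀' - F₀F₁' + F₃F₂' - F₂F₃' = 0`. -/
theorem stmt8 (d ℓ k : ℕ) (hℓ : 0 < ℓ) (hk : 0 < k) (hne : ℓ ≠ k)
    (hsum : ℓ + k = d) (hd : 3 ≤ d) (α : ℂ) (hα : α ≠ 0) (t : ℂ) :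
    (C (t * (((ℓ : ℂ) + (k : ℂ)) / ((ℓ : ℂ) - (k : ℂ)))) * X ^ ℓ)
        * derivative (X ^ k - C α : ℂ[X])
      - (X ^ k - C α)
        * derivative (C (t * (((ℓ : ℂ) + (k : ℂ)) / ((ℓ : ℂ) - (k : ℂ)))) * X ^ ℓ)
      + C t * derivative (X ^ ℓ * (X ^ k - C (α * (((ℓ : ℂ) + (k : ℂ)) / ((ℓ : ℂ) - (k : ℂ))))) : ℂ[X])
      - (X ^ ℓ * (X ^ k - C (α * (((ℓ : ℂ) + (k : ℂ)) / ((ℓ : ℂ) - (k : ℂ))))))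
        * derivative (C t : ℂ[X]) = 0 := by
  have hab : (ℓ:ℂ) - (k:ℂ) ≠ 0 := sub_ne_zero.mpr (by exact_mod_cast hne)
  set r : ℂ := ((ℓ : ℂ) + (k : ℂ)) / ((ℓ : ℂ) - (k : ℂ)) with hr
  have hr2 : r * ((ℓ:ℂ) - k) = (ℓ:ℂ) + k := by
    rw [hr]; field_simp
  have hC := congrArg (C : ℂ → ℂ[X]) hr2
  obtain ⟨a, rfl⟩ : ∃ a, ℓ = a + 1 := ⟨ℓ - 1, (Nat.succ_pred_eq_of_pos hℓ).symm⟩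
  obtain ⟨b, rfl⟩ : ∃ b, k = b + 1 := ⟨k - 1, (Nat.succ_pred_eq_of_pos hk).symm⟩
  simp only [derivative_sub, derivative_C, derivative_mul, derivative_X_pow,
    Nat.add_sub_cancel, sub_zero, mul_zero, zero_mul, zero_add, add_zero,
    C_mul, C_sub, C_add] at hC ⊢
  push_cast at hC ⊢
  linear_combination (-1 * C t * X ^ (a + b + 1) : ℂ[X]) * hC
end
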